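/- Let k be a field of characteristic 0, and let a, b, c ∈ k[x] be pairwise coprime polynomials, not all constant, with a + b = c. Then deg(c) < n₀(abc), where n₀(abc) denotes the number of distinct roots of the product abc in an algebraic closure of k. -/

import Mathlib

open Polynomial
open scoped Classical

open UniqueFactorizationMonoid in
private lemma squarefree_prod_of_nodup {K : Type*} [Field K] (m : Multiset (K[X]))
    (hnodup : m.Nodup) (hprime : ∀ p ∈ m, Irreducible p ∧ normalize p = p) :
    Squarefree m.prod := by
  rw [squarefree_iff_nodup_normalizedFactors (by
    intro h
    exact (Multiset.prod_ne_zero (fun h0 => ((hprime 0 h0).1).ne_zero rfl)) h)]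
  rw [normalizedFactors_prod_eq _ (fun p hp => (hprime p hp).1)]
  rw [Multiset.map_congr rfl (fun p hp => (hprime p hp).2)]
  simpa using hnodup

open UniqueFactorizationMonoid in
private lemma squarefree_radical_poly {K : Type*} [Field K] (f : K[X]) :
    Squarefree (radical f) := by
  letI inst : DecidableEq K[X] := fun a b => Classical.propDecidable (a = b)
  rw [radical, primeFactors, Finset.prod_eq_multiset_prod, Multiset.map_id,
    Multiset.toFinset_val]
  exact squarefree_prod_of_nodup _ (Multiset.nodup_dedup _) (fun p hp =>
    ⟨irreducible_of_normalized_factor p (Multiset.mem_dedup.mp hp),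
     normalize_normalized_factor p (Multiset.mem_dedup.mp hp)⟩)

/-- Mason–Stothers (abc for polynomials): if `a, b, c ∈ k[x]` (char k = 0) are
pairwise coprime, not all constant, and `a + b = c`, then
`deg c < n₀(abc)`, the number of distinct roots of `abc` in an algebraic closure. -/
theorem polynomial_abc (k : Type*) [Field k] [CharZero k]
    (a b c : Polynomial k) (hab : IsCoprime a b) (hbc : IsCoprime b c)
    (hac : IsCoprime a c)
    (hnc : ¬ (a.natDegree = 0 ∧ b.natDegree = 0 ∧ c.natDegree = 0))
    (habc : a + b = c) :
    c.natDegree <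
      (((a * b * c).map (algebraMap k (AlgebraicClosure k))).roots.toFinset.card) := by
  classical
  -- all three are nonzero
  have ha : a ≠ 0 := by
    rintro rfl
    rw [isCoprime_zero_left] at hab
    rw [zero_add] at habc
    exact hnc ⟨natDegree_zero, natDegree_eq_zero_of_isUnit hab,
      habc ▸ natDegree_eq_zero_of_isUnit hab⟩
  have hb : b ≠ 0 := by
    rintro rfl
    rw [isCoprime_zero_right] at hab
    rw [add_zero] at habc
    exact hnc ⟨natDegree_eq_zero_of_isUnit hab, natDegree_zero,
      habc ▸ natDegree_eq_zero_of_isUnit hab⟩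
  have hc : c ≠ 0 := by
    rintro rfl
    rw [isCoprime_zero_right] at hbc hac
    exact hnc ⟨natDegree_eq_zero_of_isUnit hac, natDegree_eq_zero_of_isUnit hbc, natDegree_zero⟩
  -- Mason–Stothers from Mathlib
  have hsum : a + b + (-c) = 0 := by rw [habc]; ring
  have H := Polynomial.abc ha hb (neg_ne_zero.mpr hc) hab hsum
  rcases H with ⟨_, _, Hc⟩ | ⟨da, db, _⟩
  · -- radical (a * b * (-c)) = radical (a * b * c)
    have hrad : UniqueFactorizationMonoid.radical (a * b * -c)
        = UniqueFactorizationMonoid.radical (a * b * c) := by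
      rw [mul_neg, UniqueFactorizationDomain.radical_neg]
    rw [natDegree_neg, hrad] at Hc
    -- bridge to distinct roots in the algebraic closure
    set f := a * b * c with hf
    have hf0 : f ≠ 0 := mul_ne_zero (mul_ne_zero ha hb) hc
    set r := UniqueFactorizationMonoid.radical f with hr
    have hsq : Squarefree r := squarefree_radical_poly f
    have hsep : r.Separable := (PerfectField.separable_iff_squarefree).mpr hsq
    have hr0 : r ≠ 0 := UniqueFactorizationMonoid.radical_ne_zero (a := f)
    set φ := algebraMap k (AlgebraicClosure k) with hφ
    have hsplit : Splits (r.map φ) := IsAlgClosed.splits _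
    -- natDegree r = number of roots of r.map φ, with no duplicates
    have h1 : r.natDegree = Multiset.card ((r.map φ).roots) :=
      by rw [← natDegree_map φ]; exact hsplit.natDegree_eq_card_roots
    have hnodup : ((r.map φ).roots).Nodup := nodup_roots hsep.map
    have h2 : ((r.map φ).roots).toFinset.card = r.natDegree := by
      rw [Multiset.toFinset_card_of_nodup hnodup, ← h1]
    -- roots of r.map φ are among roots of f.map φ
    have hdvd : r.map φ ∣ f.map φ :=
      Polynomial.map_dvd φ (UniqueFactorizationMonoid.radical_dvd_self (a := f))
    have hfm0 : f.map φ ≠ 0 := (Polynomial.map_ne_zero_iff (algebraMap k _).injective).mpr hf0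
    have hsub : ((r.map φ).roots).toFinset ⊆ ((f.map φ).roots).toFinset := by
      intro x hx
      rw [Multiset.mem_toFinset] at hx ⊢
      exact Multiset.mem_of_le (Polynomial.roots.le_of_dvd hfm0 hdvd) hx
    calc c.natDegree < r.natDegree := Hc
      _ = ((r.map φ).roots).toFinset.card := h2.symm
      _ ≤ ((f.map φ).roots).toFinset.card := Finset.card_le_card hsub
  · -- derivatives zero contradicts "not all constant" in characteristic zero
    exact absurd ⟨natDegree_eq_zero_of_derivative_eq_zero da,
      natDegree_eq_zero_of_derivative_eq_zero db, by
        rw [← habc]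
        have : (a + b).natDegree ≤ 0 := by
          apply le_trans (natDegree_add_le a b)
          simp [natDegree_eq_zero_of_derivative_eq_zero da,
            natDegree_eq_zero_of_derivative_eq_zero db]
        omega⟩ hnc
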